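/- Fix ε ≥ 0 and σ, and let Φ: [0,1] → [0,∞) be continuous nondecreasing with Φ(0)=0 and c u³ ≤ Γ(u) := ∫₀^u Φ ≤ c' u³ on [0,1] for constants 0 < c ≤ c'. Suppose p: (0,∞) → (0,1] is a C² solution of (1/2)p'' = ε p + Φ(p) with p(0⁺) = 1 and p(x) → 0 as x → ∞. Then for every x > 0, ∫_{p(x)}^1 du / √(2ε u² + 4Γ(u)) = x. -/

import Mathlib

open Filter Topology

/-- If p : (0,∞) → (0,1] is a C² solution of (1/2)p'' = εp + Φ(p)
with p(0⁺)=1 and p(∞)=0, where Γ(u) = ∫₀ᵘ Φ satisfies c u³ ≤ Γ(u) ≤ c' u³ on [0,1],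
then ∫_{p(x)}^1 du/√(2εu² + 4Γ(u)) = x for every x > 0. -/
theorem ode_first_integral (ε σ c c' : ℝ) (hε : 0 ≤ ε) (hσ : 0 < σ)
    (hc : 0 < c) (hcc' : c ≤ c')
    (Φ : ℝ → ℝ)
    (hΦcont : ContinuousOn Φ (Set.Icc 0 1))
    (hΦmono : MonotoneOn Φ (Set.Icc 0 1))
    (hΦ0 : Φ 0 = 0)
    (hΓ : ∀ u ∈ Set.Icc (0:ℝ) 1,
      c * u ^ 3 ≤ (∫ v in (0:ℝ)..u, Φ v) ∧ (∫ v in (0:ℝ)..u, Φ v) ≤ c' * u ^ 3)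
    (p p' p'' : ℝ → ℝ)
    (hrange : ∀ x > (0:ℝ), p x ∈ Set.Ioc (0:ℝ) 1)
    (hderiv1 : ∀ x > (0:ℝ), HasDerivAt p (p' x) x)
    (hderiv2 : ∀ x > (0:ℝ), HasDerivAt p' (p'' x) x)
    (hode : ∀ x > (0:ℝ), (1/2 : ℝ) * p'' x = ε * p x + Φ (p x))
    (hbdry0 : Tendsto p (𝓝[>] 0) (𝓝 1))
    (hbdryinf : Tendsto p atTop (𝓝 0)) :
    ∀ x > (0:ℝ),
      (∫ u in (p x)..1,
        1 / Real.sqrt (2 * ε * u ^ 2 + 4 * (∫ v in (0:ℝ)..u, Φ v))) = x := by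
  -- clamp to [0,1]
  have hπmem : ∀ u : ℝ, max 0 (min u 1) ∈ Set.Icc (0:ℝ) 1 :=
    fun u => ⟨le_max_left _ _, max_le zero_le_one (min_le_right _ _)⟩
  have hπid : ∀ u ∈ Set.Icc (0:ℝ) 1, max 0 (min u 1) = u := by
    intro u hu
    rw [min_eq_left hu.2, max_eq_right hu.1]
  set Φt : ℝ → ℝ := fun u => Φ (max 0 (min u 1)) with hΦt
  have hΦtcont : Continuous Φt :=
    hΦcont.comp_continuous (continuous_const.max (continuous_id.min continuous_const)) hπmem
  have hΦteq : ∀ u ∈ Set.Icc (0:ℝ) 1, Φt u = Φ u := by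
    intro u hu
    simp only [hΦt, hπid u hu]
  have hΦtnn : ∀ u : ℝ, 0 ≤ Φt u := by
    intro u
    have := hΦmono (Set.left_mem_Icc.2 zero_le_one) (hπmem u) (hπmem u).1
    rwa [hΦ0] at this
  set Γt : ℝ → ℝ := fun u => ∫ v in (0:ℝ)..u, Φt v with hΓtdef
  have hΓtderiv : ∀ u : ℝ, HasDerivAt Γt (Φt u) u := by
    intro u
    exact intervalIntegral.integral_hasDerivAt_right
      (hΦtcont.intervalIntegrable _ _)
      (hΦtcont.stronglyMeasurableAtFilter _ _) hΦtcont.continuousAt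
  have hΓteq : ∀ u ∈ Set.Icc (0:ℝ) 1, Γt u = ∫ v in (0:ℝ)..u, Φ v := by
    intro u hu
    apply intervalIntegral.integral_congr
    intro v hv
    rw [Set.uIcc_of_le hu.1] at hv
    exact hΦteq v ⟨hv.1, hv.2.trans hu.2⟩
  have hΓtmono : ∀ a b : ℝ, a ≤ b → Γt a ≤ Γt b := by
    intro a b hab
    have h1 : Γt b - Γt a = ∫ v in a..b, Φt v :=
      intervalIntegral.integral_interval_sub_left
        (hΦtcont.intervalIntegrable _ _) (hΦtcont.intervalIntegrable _ _)
    have h2 : 0 ≤ ∫ v in a..b, Φt v :=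
      intervalIntegral.integral_nonneg hab (fun u _ => hΦtnn u)
    linarith
  set q : ℝ → ℝ := fun u => 2 * ε * u ^ 2 + 4 * Γt u with hqdef
  have hqpos : ∀ u : ℝ, 0 < u → 0 < q u := by
    intro u hu
    have h1 : 0 < Γt u := by
      rcases le_or_gt u 1 with h | h
      · have h2 := (hΓ u ⟨hu.le, h⟩).1
        rw [← hΓteq u ⟨hu.le, h⟩] at h2
        calc (0:ℝ) < c * u ^ 3 := by positivity
          _ ≤ Γt u := h2
      · have h2 := (hΓ 1 ⟨zero_le_one, le_refl 1⟩).1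
        rw [← hΓteq 1 ⟨zero_le_one, le_refl 1⟩] at h2
        have h3 := hΓtmono 1 u h.le
        simp at h2
        linarith
    have : 0 ≤ 2 * ε * u ^ 2 := by positivity
    simp only [hqdef]
    linarith
  have hqderiv : ∀ u : ℝ, HasDerivAt q (4 * ε * u + 4 * Φt u) u := by
    intro u
    have h1 : HasDerivAt (fun u : ℝ => 2 * ε * u ^ 2) (2 * ε * (2 * u)) u := by
      simpa using ((hasDerivAt_pow 2 u).const_mul (2 * ε))
    have h2 := (hΓtderiv u).const_mul 4
    refine (h1.add h2).congr_deriv ?_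
    ring
  have hqcont : Continuous q :=
    continuous_iff_continuousAt.2 fun u => (hqderiv u).continuousAt
  -- Φt agrees with Φ at p x
  have hΦpx : ∀ x > (0:ℝ), Φt (p x) = Φ (p x) := by
    intro x hx
    exact hΦteq (p x) ⟨(hrange x hx).1.le, (hrange x hx).2⟩
  -- energy is constant
  have hEderiv : ∀ x ∈ Set.Ioi (0:ℝ),
      HasDerivWithinAt (fun x => p' x ^ 2 - q (p x)) 0 (Set.Ioi 0) x := by
    intro x hx
    rw [Set.mem_Ioi] at hx
    have h1 : HasDerivAt (fun x => p' x ^ 2) ((2:ℕ) * p' x ^ 1 * p'' x) x :=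
      (hderiv2 x hx).pow 2
    have h2 : HasDerivAt (fun x => q (p x)) ((4 * ε * p x + 4 * Φt (p x)) * p' x) x :=
      (hqderiv (p x)).comp x (hderiv1 x hx)
    have h3 := (h1.sub h2).hasDerivWithinAt (s := Set.Ioi 0)
    refine h3.congr_deriv ?_
    have hodex : p'' x = 2 * (ε * p x + Φ (p x)) := by linarith [hode x hx]
    rw [hodex, hΦpx x hx]
    ring
  have hEconst : ∀ x > (0:ℝ), ∀ y > (0:ℝ),
      p' x ^ 2 - q (p x) = p' y ^ 2 - q (p y) := by
    intro x hx y hy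
    have h := Convex.norm_image_sub_le_of_norm_hasDerivWithin_le
      (f' := fun _ => (0:ℝ)) (C := 0) (fun z hz => hEderiv z hz)
      (fun z _ => by simp) (convex_Ioi 0) hx hy
    simp only [Real.norm_eq_abs, mul_comm, zero_mul] at h
    have := abs_nonneg ((p' y ^ 2 - q (p y)) - (p' x ^ 2 - q (p x)))
    have h' : |(p' y ^ 2 - q (p y)) - (p' x ^ 2 - q (p x))| = 0 := le_antisymm (by simpa using h) this
    have := abs_eq_zero.1 h'
    linarith
  -- p'' ≥ 0, p' monotone
  have hp''nn : ∀ x > (0:ℝ), 0 ≤ p'' x := by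
    intro x hx
    have h1 := hode x hx
    have h2 := hΦtnn (p x)
    rw [hΦpx x hx] at h2
    have h3 := (hrange x hx).1
    nlinarith
  have hp'mono : MonotoneOn p' (Set.Ioi 0) := by
    have : ∀ x ∈ interior (Set.Ioi (0:ℝ)), 0 ≤ deriv p' x := by
      intro x hx
      rw [interior_Ioi] at hx
      rw [(hderiv2 x hx).deriv]
      exact hp''nn x hx
    exact monotoneOn_of_deriv_nonneg (convex_Ioi 0)
      (fun x hx => (hderiv2 x hx).continuousAt.continuousWithinAt)
      (fun x hx => (hderiv2 x (by rwa [interior_Ioi] at hx)).differentiableAt.differentiableWithinAt)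
      this
  -- MVT slopes
  have hslope : ∀ a b : ℝ, 0 < a → a < b →
      ∃ ξ ∈ Set.Ioo a b, p' ξ = (p b - p a) / (b - a) := by
    intro a b ha hab
    exact exists_hasDerivAt_eq_slope p p' hab
      (fun z hz => (hderiv1 z (lt_of_lt_of_le ha hz.1)).continuousAt.continuousWithinAt)
      (fun z hz => hderiv1 z (ha.trans hz.1))
  -- p' → 0 at ∞
  have hp'lim : Tendsto p' atTop (𝓝 0) := by
    have hupper : ∀ x : ℝ, 1 ≤ x → p' x ≤ p (x + 1) - p x := by
      intro x hx
      have hx0 : (0:ℝ) < x := lt_of_lt_of_le one_pos hx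
      obtain ⟨ξ, hξ, hval⟩ := hslope x (x + 1) hx0 (by linarith)
      have : p' x ≤ p' ξ := hp'mono (Set.mem_Ioi.2 hx0)
        (Set.mem_Ioi.2 (hx0.trans hξ.1)) hξ.1.le
      rw [hval] at this
      have hb : x + 1 - x = 1 := by ring
      rw [hb, div_one] at this
      exact this
    have hlower : ∀ x : ℝ, 2 ≤ x → p x - p (x - 1) ≤ p' x := by
      intro x hx
      have hx0 : (0:ℝ) < x - 1 := by linarith
      obtain ⟨ξ, hξ, hval⟩ := hslope (x - 1) x hx0 (by linarith)
      have : p' ξ ≤ p' x := hp'mono (Set.mem_Ioi.2 (hx0.trans hξ.1))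
        (Set.mem_Ioi.2 (by linarith)) hξ.2.le
      rw [hval] at this
      have hb : x - (x - 1) = 1 := by ring
      rw [hb, div_one] at this
      exact this
    have hlow : Tendsto (fun x => p x - p (x - 1)) atTop (𝓝 0) := by
      have h1 : Tendsto (fun x : ℝ => p (x - 1)) atTop (𝓝 0) :=
        hbdryinf.comp (tendsto_atTop_add_const_right atTop (-1) tendsto_id)
      simpa using hbdryinf.sub h1
    have hup : Tendsto (fun x => p (x + 1) - p x) atTop (𝓝 0) := by
      have h1 : Tendsto (fun x : ℝ => p (x + 1)) atTop (𝓝 0) :=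
        hbdryinf.comp (tendsto_atTop_add_const_right atTop 1 tendsto_id)
      simpa using h1.sub hbdryinf
    refine tendsto_of_tendsto_of_tendsto_of_le_of_le' hlow hup ?_ ?_
    · filter_upwards [eventually_ge_atTop (2:ℝ)] with x hx
      exact hlower x hx
    · filter_upwards [eventually_ge_atTop (1:ℝ)] with x hx
      exact hupper x hx
  have hp'np : ∀ x > (0:ℝ), p' x ≤ 0 := by
    intro x hx
    refine ge_of_tendsto hp'lim ?_
    filter_upwards [eventually_ge_atTop x] with y hy
    exact hp'mono (Set.mem_Ioi.2 hx) (Set.mem_Ioi.2 (lt_of_lt_of_le hx hy)) hy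
  -- energy equals 0
  have hE0 : ∀ x > (0:ℝ), p' x ^ 2 = q (p x) := by
    intro x hx
    have hq0 : q 0 = 0 := by
      simp only [hqdef, hΓtdef]
      simp [intervalIntegral.integral_same]
    have hlim : Tendsto (fun y => p' y ^ 2 - q (p y)) atTop (𝓝 0) := by
      have h1 : Tendsto (fun y => p' y ^ 2) atTop (𝓝 0) := by
        have := hp'lim.mul hp'lim
        simp only [mul_zero] at this
        refine this.congr (fun y => ?_)
        ring
      have h2 : Tendsto (fun y => q (p y)) atTop (𝓝 0) := by
        have := (hqcont.tendsto 0).comp hbdryinf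
        rwa [hq0] at this
      simpa using h1.sub h2
    have hconst : Tendsto (fun y => p' y ^ 2 - q (p y)) atTop
        (𝓝 (p' x ^ 2 - q (p x))) := by
      apply Tendsto.congr' _ tendsto_const_nhds
      filter_upwards [eventually_gt_atTop (0:ℝ)] with y hy
      exact hEconst x hx y hy
    have := tendsto_nhds_unique hconst hlim
    linarith
  have hp'neg : ∀ x > (0:ℝ), p' x < 0 := by
    intro x hx
    rcases lt_or_eq_of_le (hp'np x hx) with h | h
    · exact h
    · exfalso
      have h1 := hE0 x hx
      have h2 := hqpos (p x) (hrange x hx).1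
      rw [← h1, h] at h2
      norm_num at h2
  have hp'val : ∀ x > (0:ℝ), p' x = -Real.sqrt (q (p x)) := by
    intro x hx
    have h1 : Real.sqrt (q (p x)) = |p' x| := by
      rw [← hE0 x hx, Real.sqrt_sq_eq_abs]
    rw [h1, abs_of_neg (hp'neg x hx)]
    ring
  -- the integrand g and the primitive G
  set g : ℝ → ℝ := fun u => 1 / Real.sqrt (q u) with hgdef
  have hgcont : ∀ u : ℝ, 0 < u → ContinuousAt g u := by
    intro u hu
    have h1 : Real.sqrt (q u) ≠ 0 := ne_of_gt (Real.sqrt_pos.2 (hqpos u hu))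
    exact continuousAt_const.div
      (Real.continuous_sqrt.continuousAt.comp hqcont.continuousAt) h1
  have hgconton : ContinuousOn g (Set.Ioi 0) :=
    fun u hu => (hgcont u hu).continuousWithinAt
  set G : ℝ → ℝ := fun y => ∫ u in (1:ℝ)..y, g u with hGdef
  have hGderiv : ∀ y : ℝ, 0 < y → HasDerivAt G (g y) y := by
    intro y hy
    apply intervalIntegral.integral_hasDerivAt_right
    · apply ContinuousOn.intervalIntegrable
      apply hgconton.mono
      intro z hz
      rw [Set.mem_uIcc] at hz
      rcases hz with hz | hz
      · exact lt_of_lt_of_le one_pos hz.1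
      · exact lt_of_lt_of_le hy hz.1
    · exact hgconton.stronglyMeasurableAtFilter isOpen_Ioi y hy
    · exact hgcont y hy
  -- the key identity G (p x) = -x
  have key : ∀ x > (0:ℝ), G (p x) = -x := by
    intro x hx
    have hHd : ∀ z ∈ Set.Ioi (0:ℝ),
        HasDerivWithinAt (fun z => G (p z) + z) 0 (Set.Ioi 0) z := by
      intro z hz
      rw [Set.mem_Ioi] at hz
      have h1 : HasDerivAt (fun z => G (p z)) (g (p z) * p' z) z :=
        (hGderiv (p z) (hrange z hz).1).comp z (hderiv1 z hz)
      have h2 : g (p z) * p' z = -1 := by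
        have hs : Real.sqrt (q (p z)) ≠ 0 :=
          ne_of_gt (Real.sqrt_pos.2 (hqpos (p z) (hrange z hz).1))
        rw [hgdef, hp'val z hz]
        field_simp
      have h3 := (h1.add (hasDerivAt_id z)).hasDerivWithinAt (s := Set.Ioi 0)
      refine h3.congr_deriv ?_
      rw [h2]
      ring
    have hconst : ∀ a > (0:ℝ), ∀ b > (0:ℝ), G (p a) + a = G (p b) + b := by
      intro a ha b hb
      have h := Convex.norm_image_sub_le_of_norm_hasDerivWithin_le
        (f' := fun _ => (0:ℝ)) (C := 0) (fun z hz => hHd z hz)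
        (fun z _ => by simp) (convex_Ioi 0) ha hb
      simp only [Real.norm_eq_abs, zero_mul] at h
      have h' := abs_nonneg ((G (p b) + b) - (G (p a) + a))
      have h'' : |(G (p b) + b) - (G (p a) + a)| = 0 := le_antisymm (by simpa using h) h'
      have := abs_eq_zero.1 h''
      linarith
    have hlim : Tendsto (fun z => G (p z) + z) (𝓝[>] 0) (𝓝 0) := by
      have hG1 : G 1 = 0 := intervalIntegral.integral_same
      have hGc : Tendsto G (𝓝 1) (𝓝 0) := by
        have := (hGderiv 1 one_pos).continuousAt
        rw [ContinuousAt, hG1] at this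
        exact this
      have t1 : Tendsto (fun z => G (p z)) (𝓝[>] 0) (𝓝 0) := hGc.comp hbdry0
      have t2 : Tendsto (fun z : ℝ => z) (𝓝[>] 0) (𝓝 0) :=
        tendsto_id.mono_left nhdsWithin_le_nhds
      simpa using t1.add t2
    have hcc : Tendsto (fun z => G (p z) + z) (𝓝[>] 0) (𝓝 (G (p x) + x)) := by
      apply Tendsto.congr' _ tendsto_const_nhds
      filter_upwards [self_mem_nhdsWithin] with z hz
      exact hconst x hx z hz
    have := tendsto_nhds_unique hcc hlim
    linarith
  -- conclusion
  intro x hx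
  have hgoal : (∫ u in (p x)..1,
      1 / Real.sqrt (2 * ε * u ^ 2 + 4 * (∫ v in (0:ℝ)..u, Φ v)))
      = ∫ u in (p x)..1, g u := by
    apply intervalIntegral.integral_congr
    intro u hu
    rw [Set.uIcc_of_le (hrange x hx).2] at hu
    have hu' : u ∈ Set.Icc (0:ℝ) 1 := ⟨(hrange x hx).1.le.trans hu.1, hu.2⟩
    simp only [hgdef, hqdef]
    rw [hΓteq u hu']
  rw [hgoal, intervalIntegral.integral_symm]
  have := key x hx
  rw [hGdef] at this
  simp only at this
  rw [this]
  ring
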